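/- Let G=(V,E) be a finite simple graph with E ≠ ∅, ω: E → ℚ an edge-weight function, χ: V → {1,2} a 2-coloring, k a positive integer, and S' ⊆ V with |S'| < k. For v ∈ V and i ∈ {1,2} let ω_v^i := ω({{v,w} ∈ E : w ∈ N(v), χ(w) ≠ i}); let ω_max := max_{e ∈ E} |ω(e)|; for v ∈ V let χ(v)‾ denote the unique color in {1,2}\{χ(v)}; let χ_{S'} be the 2-coloring with χ_{S'}(v) = χ(v)‾ for v ∈ S' and χ_{S'}(v) = χ(v) otherwise. For v ∈ V\S', let β_v := 2·Σ_{e ∈ E(v,S') ∩ E(χ)} ω(e) − 2·Σ_{e ∈ E(v,S') \ E(χ)} ω(e), where E(v,S') is the set of edges joining v to a vertex of S', and let α_v := ω_v^{χ(v)‾} − ω_v^{χ(v)} + β_v. Let Y ⊆ V\S' be any set of k − |S'| vertices such that α_w ≤ α_v for every w ∈ V\(S' ∪ Y) and every v ∈ Y. Then for every 2-coloring χ' of G with S' ⊊ D_flip(χ,χ') and d_flip(χ,χ') = k, it holds that ω(E(χ')) ≤ ω(E(χ_{S'})) + Σ_{v ∈ Y} α_v + 2·C(k−|S'|, 2)·ω_max,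 where C(·,2) denotes the binomial coefficient. -/
import Mathlib

open Finset
open scoped Classical

lemma fin2_eq_add_one_iff (a b : Fin 2) : (a = b + 1) ↔ ¬ a = b := by revert a b; decide
lemma fin2_add_one_eq_iff (a b : Fin 2) : (a + 1 = b) ↔ ¬ a = b := by revert a b; decide
lemma fin2_add_one_eq_add_one_iff (a b : Fin 2) : (a + 1 = b + 1) ↔ a = b := by revert a b; decide

lemma two_mul_choose_two (t : ℕ) : 2 * t.choose 2 = t * t - t := by
  induction t with
  | zero => simp
  | succ n ih =>
    rw [Nat.choose_succ_succ, Nat.mul_add, ih, Nat.choose_one_right]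
    have h1 : n ≤ n * n := by nlinarith
    have h2 : n + 1 ≤ (n + 1) * (n + 1) := by nlinarith
    zify [h1, h2]; ring

lemma pointwise_key (a b : Fin 2) (sv tv sw tw : Prop) [Decidable sv] [Decidable tv]
    [Decidable sw] [Decidable tw] (hv : ¬ (sv ∧ tv)) (hw : ¬ (sw ∧ tw)) (x : ℚ) :
    (if ¬ (if sv ∨ tv then a + 1 else a) = (if sw ∨ tw then b + 1 else b) then x else 0)
      = (if ¬ (if sv then a + 1 else a) = (if sw then b + 1 else b) then x else 0)
        + ((if tv then ((if b ≠ a + 1 then x else 0) - (if b ≠ a then x else 0) +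
              (2 * (if sw ∧ b ≠ a then x else 0) - 2 * (if sw ∧ b = a then x else 0))) else 0)
          + (if tw then ((if a ≠ b + 1 then x else 0) - (if a ≠ b then x else 0) +
              (2 * (if sv ∧ a ≠ b then x else 0) - 2 * (if sv ∧ a = b then x else 0))) else 0))
        + (if tv ∧ tw then (if a = b then -(2 * x) else 2 * x) else 0) := by
  by_cases hsv : sv <;> by_cases htv : tv <;> by_cases hsw : sw <;> by_cases htw : tw <;>
    by_cases hab : a = b <;>
    simp_all [fin2_eq_add_one_iff, fin2_add_one_eq_iff, fin2_add_one_eq_add_one_iff, eq_comm] <;>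
    ring

section
variable {V : Type*} [Fintype V] [DecidableEq V] (G : SimpleGraph V) [DecidableRel G.Adj]

/-- sum over ordered adjacent pairs equals twice the sum over edges -/
lemma pair_sum_eq_two_mul_edge_sum (g : Sym2 V → ℚ) :
    ∑ p ∈ (univ ×ˢ univ).filter (fun p : V × V => G.Adj p.1 p.2), g s(p.1, p.2)
      = 2 * ∑ e ∈ G.edgeFinset, g e := by
  rw [Finset.sum_comp]
  have himg : ((univ ×ˢ univ).filter fun p : V × V => G.Adj p.1 p.2).image
      (fun p : V × V => s(p.1, p.2)) = G.edgeFinset := by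
    ext e
    induction e using Sym2.ind with
    | _ a b =>
      simp only [mem_image, mem_filter, mem_product, mem_univ, true_and,
        SimpleGraph.mem_edgeFinset, SimpleGraph.mem_edgeSet]
      constructor
      · rintro ⟨⟨x, y⟩, hadj, h⟩
        rw [Sym2.eq_iff] at h
        rcases h with ⟨rfl, rfl⟩ | ⟨rfl, rfl⟩
        · exact hadj
        · exact hadj.symm
      · intro h; exact ⟨(a, b), h, rfl⟩
  rw [himg, Finset.mul_sum]
  refine Finset.sum_congr rfl fun e he => ?_
  induction e using Sym2.ind with
  | _ a b =>
    have hadj : G.Adj a b := by simpa using he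
    have hfib : (((univ ×ˢ univ).filter fun p : V × V => G.Adj p.1 p.2).filter
        (fun p => s(p.1, p.2) = s(a, b))) = {(a, b), (b, a)} := by
      ext ⟨x, y⟩
      simp only [mem_filter, mem_product, mem_univ, true_and, Sym2.eq_iff,
        mem_insert, mem_singleton, Prod.mk.injEq]
      constructor
      · rintro ⟨_, ⟨rfl, rfl⟩ | ⟨rfl, rfl⟩⟩
        · exact Or.inl ⟨rfl, rfl⟩
        · exact Or.inr ⟨rfl, rfl⟩
      · rintro (⟨rfl, rfl⟩ | ⟨rfl, rfl⟩)
        · exact ⟨hadj, Or.inl ⟨rfl, rfl⟩⟩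
        · exact ⟨hadj.symm, Or.inr ⟨rfl, rfl⟩⟩
    rw [show {p ∈ (univ ×ˢ univ).filter fun p : V × V => G.Adj p.1 p.2 |
        (fun p : V × V => s(p.1, p.2)) p = s(a, b)} = ({(a, b), (b, a)} : Finset (V × V))
      from hfib]
    have hne : ((a, b) : V × V) ≠ (b, a) := fun h => hadj.ne (congrArg Prod.fst h)
    rw [Finset.card_insert_of_notMem (by rw [Finset.mem_singleton]; exact hne),
      Finset.card_singleton]
    rw [nsmul_eq_mul]; norm_num

omit [DecidableEq V] in
lemma pair_sum_eq_nbhd_sum (F : V → V → ℚ) :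
    ∑ p ∈ (univ ×ˢ univ).filter (fun p : V × V => G.Adj p.1 p.2), F p.1 p.2
      = ∑ v, ∑ w ∈ G.neighborFinset v, F v w := by
  rw [Finset.sum_filter, Finset.sum_product]
  refine Finset.sum_congr rfl fun v _ => ?_
  rw [SimpleGraph.neighborFinset_eq_filter, Finset.sum_filter]

omit [DecidableEq V] in
lemma pair_sum_swap (F : V → V → ℚ) :
    ∑ p ∈ (univ ×ˢ univ).filter (fun p : V × V => G.Adj p.1 p.2), F p.1 p.2
      = ∑ p ∈ (univ ×ˢ univ).filter (fun p : V × V => G.Adj p.1 p.2), F p.2 p.1 := by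
  refine Finset.sum_equiv (Equiv.prodComm V V) ?_ ?_
  · intro p; simp [G.adj_comm]
  · intro p _; rfl

end

/-- The local α-contribution of the ordered pair `(v, w)`. -/
noncomputable def Afun {V : Type*} [DecidableEq V] (ω : Sym2 V → ℚ) (χ : V → Fin 2) (S' : Finset V)
    (v w : V) : ℚ :=
  (if χ w ≠ χ v + 1 then ω s(v, w) else 0) - (if χ w ≠ χ v then ω s(v, w) else 0) +
  (2 * (if w ∈ S' ∧ χ w ≠ χ v then ω s(v, w) else 0) -
    2 * (if w ∈ S' ∧ χ w = χ v then ω s(v, w) else 0))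

/-- The finset of properly colored edges of `G` under the coloring `χ`. -/
noncomputable def properEdges {V : Type*} [Fintype V] {α : Type*}
    (G : SimpleGraph V) (χ : V → α) : Finset (Sym2 V) :=
  G.edgeFinset.filter fun e => ¬ (Sym2.map χ e).IsDiag

/-- The flip between two colorings: the set of vertices where they differ. -/
noncomputable def flipSet {V : Type*} [Fintype V] {α : Type*}
    (χ χ' : V → α) : Finset V :=
  univ.filter fun v => χ v ≠ χ' v

theorem upper_bound_two_colors
    {V : Type*} [Fintype V] [DecidableEq V]
    (G : SimpleGraph V) [DecidableRel G.Adj]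
    (hE : G.edgeFinset.Nonempty)
    (ω : Sym2 V → ℚ) (χ : V → Fin 2) (k : ℕ) (hk : 1 ≤ k)
    (S' : Finset V) (hS' : S'.card < k)
    -- `ω_v^i`: total weight of edges at `v` that are properly colored when `v` gets color `i`
    (ωv : V → Fin 2 → ℚ)
    (hωv : ∀ v i, ωv v i = ∑ w ∈ (G.neighborFinset v).filter (fun w => χ w ≠ i), ω s(v, w))
    -- `β_v` for `v ∉ S'`
    (β : V → ℚ)
    (hβ : ∀ v, β v =
      2 * (∑ w ∈ (G.neighborFinset v ∩ S').filter (fun w => χ w ≠ χ v), ω s(v, w)) -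
      2 * (∑ w ∈ (G.neighborFinset v ∩ S').filter (fun w => χ w = χ v), ω s(v, w)))
    -- `α_v = ω_v^{other color} - ω_v^{χ v} + β_v`
    (α : V → ℚ)
    (hα : ∀ v, α v = ωv v (χ v + 1) - ωv v (χ v) + β v)
    -- `Y ⊆ V \ S'` consists of `k - |S'|` vertices with largest `α`-values
    (Y : Finset V) (hYS' : Disjoint Y S') (hYcard : Y.card = k - S'.card)
    (hYmax : ∀ w, w ∉ S' → w ∉ Y → ∀ v ∈ Y, α w ≤ α v) :
    ∀ χ' : V → Fin 2, S' ⊂ flipSet χ χ' → (flipSet χ χ').card = k →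
      (∑ e ∈ properEdges G χ', ω e) ≤
        (∑ e ∈ properEdges G (fun v => if v ∈ S' then χ v + 1 else χ v), ω e) +
        (∑ v ∈ Y, α v) +
        2 * (Nat.choose (k - S'.card) 2 : ℚ) *
          (G.edgeFinset.sup' hE fun e => |ω e|) := by
  intro χ' hsub hcard
  obtain ⟨ωmax, hωmaxdef⟩ : ∃ m : ℚ, m = (G.edgeFinset.sup' hE fun e => |ω e|) := ⟨_, rfl⟩
  rw [← hωmaxdef]
  have hωmaxle : ∀ e ∈ G.edgeFinset, |ω e| ≤ ωmax := by
    intro e he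
    rw [hωmaxdef]
    exact Finset.le_sup' (fun e => |ω e|) he
  have hωmax0 : 0 ≤ ωmax := by
    obtain ⟨e0, he0⟩ := hE
    exact le_trans (abs_nonneg (ω e0)) (hωmaxle e0 he0)
  obtain ⟨T, hTdef⟩ : ∃ T : Finset V, T = flipSet χ χ' \ S' := ⟨_, rfl⟩
  have hS'D : S' ⊆ flipSet χ χ' := hsub.subset
  have hTcard : T.card = k - S'.card := by rw [hTdef, card_sdiff_of_subset hS'D, hcard]
  have hTS' : ∀ v ∈ T, v ∉ S' := fun v hv => (mem_sdiff.mp (hTdef ▸ hv)).2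
  -- the formula for χ'
  have hχ'eq : ∀ v, χ' v = if v ∈ S' ∨ v ∈ T then χ v + 1 else χ v := by
    intro v
    have hmemD : v ∈ flipSet χ χ' ↔ ¬ χ v = χ' v := by simp [flipSet]
    have hDor : (v ∈ S' ∨ v ∈ T) ↔ v ∈ flipSet χ χ' := by
      constructor
      · rintro (h | h)
        · exact hS'D h
        · exact (mem_sdiff.mp (hTdef ▸ h : v ∈ flipSet χ χ' \ S')).1
      · intro h
        by_cases hs : v ∈ S'
        · exact Or.inl hs
        · exact Or.inr (by rw [hTdef]; exact mem_sdiff.mpr ⟨h, hs⟩)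
    by_cases h : v ∈ flipSet χ χ'
    · rw [if_pos (hDor.mpr h)]
      exact (fin2_eq_add_one_iff _ _).mpr fun hc => (hmemD.mp h) hc.symm
    · rw [if_neg fun hh => h (hDor.mp hh)]
      by_contra hne
      exact h (hmemD.mpr fun hc => hne hc.symm)
  -- expansion of α as a sum over neighbors
  have hαsum : ∀ v, α v = ∑ w ∈ G.neighborFinset v, Afun ω χ S' v w := by
    intro v
    have hf1 : (G.neighborFinset v ∩ S').filter (fun w => χ w ≠ χ v)
        = (G.neighborFinset v).filter (fun w => w ∈ S' ∧ χ w ≠ χ v) := by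
      ext w; simp only [mem_filter, mem_inter]; tauto
    have hf2 : (G.neighborFinset v ∩ S').filter (fun w => χ w = χ v)
        = (G.neighborFinset v).filter (fun w => w ∈ S' ∧ χ w = χ v) := by
      ext w; simp only [mem_filter, mem_inter]; tauto
    rw [hα, hωv, hωv, hβ, hf1, hf2]
    simp only [Finset.sum_filter]
    rw [Finset.mul_sum, Finset.mul_sum, ← Finset.sum_sub_distrib, ← Finset.sum_sub_distrib,
      ← Finset.sum_add_distrib]
    refine Finset.sum_congr rfl fun w _ => ?_
    simp only [Afun]
  -- the pair set
  have hTαpair : ∑ v ∈ T, α v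
      = ∑ p ∈ (univ ×ˢ univ).filter (fun p : V × V => G.Adj p.1 p.2),
          (if p.1 ∈ T then Afun ω χ S' p.1 p.2 else 0) := by
    have hnb : ∑ p ∈ (univ ×ˢ univ).filter (fun p : V × V => G.Adj p.1 p.2),
        (if p.1 ∈ T then Afun ω χ S' p.1 p.2 else 0)
        = ∑ v, ∑ w ∈ G.neighborFinset v, (if v ∈ T then Afun ω χ S' v w else 0) :=
      pair_sum_eq_nbhd_sum G (fun v w => if v ∈ T then Afun ω χ S' v w else 0)
    rw [hnb]
    have h0 : ∑ v ∈ T, α v = ∑ v, (if v ∈ T then α v else 0) := by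
      rw [Finset.sum_ite_mem, Finset.univ_inter]
    rw [h0]
    refine Finset.sum_congr rfl fun v _ => ?_
    by_cases hv : v ∈ T
    · simp only [hv, if_true, hαsum v]
    · simp only [hv, if_false, Finset.sum_const_zero]
  -- main identity at the pair level
  have hL := pair_sum_eq_two_mul_edge_sum G
    (fun e => if ¬ (Sym2.map χ' e).IsDiag then ω e else 0)
  have hM := pair_sum_eq_two_mul_edge_sum G
    (fun e => if ¬ (Sym2.map (fun v => if v ∈ S' then χ v + 1 else χ v) e).IsDiag
      then ω e else 0)
  have hLsum : (2:ℚ) * ∑ e ∈ properEdges G χ', ω e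
      = ∑ p ∈ (univ ×ˢ univ).filter (fun p : V × V => G.Adj p.1 p.2),
          (if ¬ (Sym2.map χ' s(p.1, p.2)).IsDiag then ω s(p.1, p.2) else 0) := by
    rw [properEdges, Finset.sum_filter]
    convert hL.symm using 3 <;> congr!
  have hMsum : (2:ℚ) * ∑ e ∈ properEdges G (fun v => if v ∈ S' then χ v + 1 else χ v), ω e
      = ∑ p ∈ (univ ×ˢ univ).filter (fun p : V × V => G.Adj p.1 p.2),
          (if ¬ (Sym2.map (fun v => if v ∈ S' then χ v + 1 else χ v) s(p.1, p.2)).IsDiag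
            then ω s(p.1, p.2) else 0) := by
    rw [properEdges, Finset.sum_filter]
    convert hM.symm using 3 <;> congr!
  -- the pointwise identity summed up
  have hkey : ∑ p ∈ (univ ×ˢ univ).filter (fun p : V × V => G.Adj p.1 p.2),
          (if ¬ (Sym2.map χ' s(p.1, p.2)).IsDiag then ω s(p.1, p.2) else 0)
      = ∑ p ∈ (univ ×ˢ univ).filter (fun p : V × V => G.Adj p.1 p.2),
          ((if ¬ (Sym2.map (fun v => if v ∈ S' then χ v + 1 else χ v) s(p.1, p.2)).IsDiag
              then ω s(p.1, p.2) else 0)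
            + ((if p.1 ∈ T then Afun ω χ S' p.1 p.2 else 0)
              + (if p.2 ∈ T then Afun ω χ S' p.2 p.1 else 0))
            + (if p.1 ∈ T ∧ p.2 ∈ T then
                (if χ p.1 = χ p.2 then -(2 * ω s(p.1, p.2)) else 2 * ω s(p.1, p.2)) else 0)) := by
    refine Finset.sum_congr rfl fun p _hp => ?_
    have hv : ¬ (p.1 ∈ S' ∧ p.1 ∈ T) := fun ⟨h1, h2⟩ => hTS' p.1 h2 h1
    have hw : ¬ (p.2 ∈ S' ∧ p.2 ∈ T) := fun ⟨h1, h2⟩ => hTS' p.2 h2 h1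
    have hsw : s(p.2, p.1) = s(p.1, p.2) := Sym2.eq_swap
    simp only [Sym2.map_pair_eq, Sym2.mk_isDiag_iff, Afun, hsw, hχ'eq]
    exact pointwise_key (χ p.1) (χ p.2) (p.1 ∈ S') (p.1 ∈ T) (p.2 ∈ S') (p.2 ∈ T) hv hw
      (ω s(p.1, p.2))
  -- bound on the remainder term
  have hRle : ∑ p ∈ (univ ×ˢ univ).filter (fun p : V × V => G.Adj p.1 p.2),
        (if p.1 ∈ T ∧ p.2 ∈ T then
          (if χ p.1 = χ p.2 then -(2 * ω s(p.1, p.2)) else 2 * ω s(p.1, p.2)) else 0)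
      ≤ 2 * (2 * (Nat.choose (k - S'.card) 2 : ℚ) * ωmax) := by
    have step1 : ∑ p ∈ (univ ×ˢ univ).filter (fun p : V × V => G.Adj p.1 p.2),
        (if p.1 ∈ T ∧ p.2 ∈ T then
          (if χ p.1 = χ p.2 then -(2 * ω s(p.1, p.2)) else 2 * ω s(p.1, p.2)) else 0)
        ≤ ∑ p ∈ (univ ×ˢ univ).filter (fun p : V × V => G.Adj p.1 p.2),
          (if p.1 ∈ T ∧ p.2 ∈ T then 2 * ωmax else 0) := by
      refine Finset.sum_le_sum fun p hp => ?_
      have hadj : G.Adj p.1 p.2 := (Finset.mem_filter.mp hp).2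
      have hedge : s(p.1, p.2) ∈ G.edgeFinset := by
        rw [SimpleGraph.mem_edgeFinset]; exact hadj
      have habs : |ω s(p.1, p.2)| ≤ ωmax := hωmaxle _ hedge
      by_cases hT2 : p.1 ∈ T ∧ p.2 ∈ T
      · rw [if_pos hT2, if_pos hT2]
        by_cases hc : χ p.1 = χ p.2
        · rw [if_pos hc]
          have := neg_abs_le (ω s(p.1, p.2))
          nlinarith [abs_nonneg (ω s(p.1, p.2))]
        · rw [if_neg hc]
          nlinarith [le_abs_self (ω s(p.1, p.2))]
      · rw [if_neg hT2, if_neg hT2]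
    have step2 : ∑ p ∈ (univ ×ˢ univ).filter (fun p : V × V => G.Adj p.1 p.2),
          (if p.1 ∈ T ∧ p.2 ∈ T then 2 * ωmax else 0)
        = (((univ ×ˢ univ).filter (fun p : V × V => G.Adj p.1 p.2)).filter
            (fun p => p.1 ∈ T ∧ p.2 ∈ T)).card • (2 * ωmax) := by
      rw [← Finset.sum_filter, Finset.sum_const]
    have step3 : (((univ ×ˢ univ).filter (fun p : V × V => G.Adj p.1 p.2)).filter
          (fun p => p.1 ∈ T ∧ p.2 ∈ T)).card ≤ T.offDiag.card := by
      refine Finset.card_le_card fun p hp => ?_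
      obtain ⟨hp1, hp2⟩ := Finset.mem_filter.mp hp
      have hadj : G.Adj p.1 p.2 := (Finset.mem_filter.mp hp1).2
      exact Finset.mem_offDiag.mpr ⟨hp2.1, hp2.2, hadj.ne⟩
    have step4 : T.offDiag.card = 2 * Nat.choose (k - S'.card) 2 := by
      rw [Finset.offDiag_card, two_mul_choose_two, hTcard]
    calc ∑ p ∈ (univ ×ˢ univ).filter (fun p : V × V => G.Adj p.1 p.2),
        (if p.1 ∈ T ∧ p.2 ∈ T then
          (if χ p.1 = χ p.2 then -(2 * ω s(p.1, p.2)) else 2 * ω s(p.1, p.2)) else 0)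
        ≤ (((univ ×ˢ univ).filter (fun p : V × V => G.Adj p.1 p.2)).filter
            (fun p => p.1 ∈ T ∧ p.2 ∈ T)).card • (2 * ωmax) := by rw [← step2]; exact step1
      _ ≤ (2 * Nat.choose (k - S'.card) 2) • (2 * ωmax) := by
          refine nsmul_le_nsmul_left (by positivity) ?_
          rw [← step4]; exact step3
      _ = 2 * (2 * (Nat.choose (k - S'.card) 2 : ℚ) * ωmax) := by
          rw [nsmul_eq_mul]; push_cast; ring
  -- comparison of α-sums
  have hαY : ∑ v ∈ T, α v ≤ ∑ v ∈ Y, α v := by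
    have hTY : T.card = Y.card := by rw [hTcard, hYcard]
    have h1 := Finset.card_sdiff_add_card_inter T Y
    have h2 := Finset.card_sdiff_add_card_inter Y T
    rw [Finset.inter_comm] at h2
    have hc1 : (T \ Y).card = (Y \ T).card := by omega
    have hsplit1 := Finset.sum_inter_add_sum_sdiff T Y α
    have hsplit2 := Finset.sum_inter_add_sum_sdiff Y T α
    rw [Finset.inter_comm] at hsplit2
    have hdiff : ∑ v ∈ T \ Y, α v ≤ ∑ v ∈ Y \ T, α v := by
      rcases Finset.eq_empty_or_nonempty (Y \ T) with hYT | hYT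
      · have hTY0 : (T \ Y) = ∅ := Finset.card_eq_zero.mp (by rw [hc1, hYT]; simp)
        simp [hTY0, hYT]
      · obtain ⟨v0, hv0, hv0min⟩ := Finset.exists_min_image (Y \ T) α hYT
        calc ∑ v ∈ T \ Y, α v ≤ ∑ _v ∈ T \ Y, α v0 := by
              refine Finset.sum_le_sum fun u hu => ?_
              obtain ⟨huT, huY⟩ := Finset.mem_sdiff.mp hu
              exact hYmax u (hTS' u huT) huY v0 (Finset.mem_sdiff.mp hv0).1
          _ = (Y \ T).card • α v0 := by rw [Finset.sum_const, hc1]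
          _ ≤ ∑ v ∈ Y \ T, α v := Finset.card_nsmul_le_sum _ _ _ hv0min
    linarith
  -- put everything together
  have hsplit : ∑ p ∈ (univ ×ˢ univ).filter (fun p : V × V => G.Adj p.1 p.2),
          ((if ¬ (Sym2.map (fun v => if v ∈ S' then χ v + 1 else χ v) s(p.1, p.2)).IsDiag
              then ω s(p.1, p.2) else 0)
            + ((if p.1 ∈ T then Afun ω χ S' p.1 p.2 else 0)
              + (if p.2 ∈ T then Afun ω χ S' p.2 p.1 else 0))
            + (if p.1 ∈ T ∧ p.2 ∈ T then
                (if χ p.1 = χ p.2 then -(2 * ω s(p.1, p.2)) else 2 * ω s(p.1, p.2)) else 0))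
      = (∑ p ∈ (univ ×ˢ univ).filter (fun p : V × V => G.Adj p.1 p.2),
          (if ¬ (Sym2.map (fun v => if v ∈ S' then χ v + 1 else χ v) s(p.1, p.2)).IsDiag
              then ω s(p.1, p.2) else 0))
        + ((∑ p ∈ (univ ×ˢ univ).filter (fun p : V × V => G.Adj p.1 p.2),
            (if p.1 ∈ T then Afun ω χ S' p.1 p.2 else 0))
          + (∑ p ∈ (univ ×ˢ univ).filter (fun p : V × V => G.Adj p.1 p.2),
            (if p.2 ∈ T then Afun ω χ S' p.2 p.1 else 0)))
        + (∑ p ∈ (univ ×ˢ univ).filter (fun p : V × V => G.Adj p.1 p.2),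
            (if p.1 ∈ T ∧ p.2 ∈ T then
              (if χ p.1 = χ p.2 then -(2 * ω s(p.1, p.2)) else 2 * ω s(p.1, p.2)) else 0)) := by
    rw [Finset.sum_add_distrib, Finset.sum_add_distrib, Finset.sum_add_distrib]
  have hswap : ∑ p ∈ (univ ×ˢ univ).filter (fun p : V × V => G.Adj p.1 p.2),
        (if p.2 ∈ T then Afun ω χ S' p.2 p.1 else 0)
      = ∑ p ∈ (univ ×ˢ univ).filter (fun p : V × V => G.Adj p.1 p.2),
        (if p.1 ∈ T then Afun ω χ S' p.1 p.2 else 0) :=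
    pair_sum_swap G fun v w => if w ∈ T then Afun ω χ S' w v else 0
  have hfinal : (2:ℚ) * ∑ e ∈ properEdges G χ', ω e
      = 2 * (∑ e ∈ properEdges G (fun v => if v ∈ S' then χ v + 1 else χ v), ω e)
        + 2 * (∑ v ∈ T, α v)
        + (∑ p ∈ (univ ×ˢ univ).filter (fun p : V × V => G.Adj p.1 p.2),
            (if p.1 ∈ T ∧ p.2 ∈ T then
              (if χ p.1 = χ p.2 then -(2 * ω s(p.1, p.2)) else 2 * ω s(p.1, p.2)) else 0)) := by
    rw [hLsum, hkey, hsplit, hswap, ← hMsum, hTαpair]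
    ring
  linarith
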